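/- Under the stated assumptions, the split-panel jackknife estimator satisfies E[β̃^J] = β·(1 − 1/(N·T)). -/

import Mathlib

open MeasureTheory

/-- The two-way fixed-effects variance estimator computed on the subpanel with
individuals in `I` and time periods in `S`. -/
noncomputable def subPanelEst {Ω : Type*} {N T : ℕ} (Y : Fin N → Fin T → Ω → ℝ)
    (I : Finset (Fin N)) (S : Finset (Fin T)) (ω : Ω) : ℝ :=
  ((I.card * S.card : ℕ) : ℝ)⁻¹ * ∑ i ∈ I, ∑ t ∈ S,
    (Y i t ω - ((S.card : ℕ) : ℝ)⁻¹ * ∑ s ∈ S, Y i s ω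
      - ((I.card : ℕ) : ℝ)⁻¹ * ∑ j ∈ I, Y j t ω
      + ((I.card * S.card : ℕ) : ℝ)⁻¹ * ∑ j ∈ I, ∑ s ∈ S, Y j s ω) ^ 2

/-- The first half `{1,…,n}` of the index set `{1,…,2n}`. -/
def firstHalf (n : ℕ) : Finset (Fin (2 * n)) :=
  Finset.univ.filter fun i => (i : ℕ) < n

/-- The second half `{n+1,…,2n}` of the index set `{1,…,2n}`. -/
def secondHalf (n : ℕ) : Finset (Fin (2 * n)) :=
  Finset.univ.filter fun i => n ≤ (i : ℕ)

lemma card_firstHalf (n : ℕ) : (firstHalf n).card = n := by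
  have h : firstHalf n = Finset.map (Fin.castLEEmb (by omega : n ≤ 2 * n)) Finset.univ := by
    ext i
    simp only [firstHalf, Finset.mem_filter, Finset.mem_univ, true_and, Finset.mem_map,
      Fin.castLEEmb_apply]
    constructor
    · intro h; exact ⟨⟨(i : ℕ), h⟩, by ext; simp⟩
    · rintro ⟨j, rfl⟩; exact j.isLt
  rw [h, Finset.card_map, Finset.card_univ, Fintype.card_fin]

lemma card_secondHalf (n : ℕ) : (secondHalf n).card = n := by
  have h : secondHalf n = (firstHalf n)ᶜ := by
    ext i; simp [firstHalf, secondHalf, not_lt]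
  rw [h, Finset.card_compl, card_firstHalf, Fintype.card_fin]
  omega

section Aux

variable {Ω : Type*} [MeasurableSpace Ω] {P : Measure Ω}

lemma memLp2_integrable_mul {f g : Ω → ℝ} (hf : MemLp f 2 P) (hg : MemLp g 2 P) :
    Integrable (fun ω => f ω * g ω) P := by
  have h := (hf.integrable_sq.add hg.integrable_sq).div_const 2
  refine h.mono' (hf.aestronglyMeasurable.mul hg.aestronglyMeasurable) ?_
  filter_upwards with ω
  have h1 : ‖f ω * g ω‖ = |f ω * g ω| := rfl
  rw [h1]
  simp only [Pi.add_apply]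
  nlinarith [sq_nonneg (|f ω| - |g ω|), abs_mul (f ω) (g ω), sq_abs (f ω), sq_abs (g ω),
    abs_nonneg (f ω * g ω)]

/-- Expectation of the square of a linear combination of orthogonal, equal-variance
random variables. -/
lemma integral_sq_sum {ι : Type*} [DecidableEq ι] (β : ℝ) (U : Finset ι)
    (e : ι → Ω → ℝ) (a : ι → ℝ)
    (hL2 : ∀ p ∈ U, MemLp (e p) 2 P)
    (hvar : ∀ p ∈ U, ∫ ω, (e p ω) ^ 2 ∂P = β)
    (horth : ∀ p ∈ U, ∀ q ∈ U, p ≠ q → ∫ ω, e p ω * e q ω ∂P = 0) :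
    ∫ ω, (∑ p ∈ U, a p * e p ω) ^ 2 ∂P = β * ∑ p ∈ U, (a p) ^ 2 := by
  have hrw : ∀ ω, (∑ p ∈ U, a p * e p ω) ^ 2
      = ∑ p ∈ U, ∑ q ∈ U, (a p * a q) * (e p ω * e q ω) := by
    intro ω
    rw [sq, Finset.sum_mul_sum]
    exact Finset.sum_congr rfl fun p _ => Finset.sum_congr rfl fun q _ => by ring
  simp_rw [hrw]
  rw [integral_finset_sum _ (fun p hp => integrable_finset_sum _
    (fun q hq => (memLp2_integrable_mul (hL2 p hp) (hL2 q hq)).const_mul _))]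
  have hinner : ∀ p ∈ U, ∫ ω, ∑ q ∈ U, (a p * a q) * (e p ω * e q ω) ∂P
      = β * (a p) ^ 2 := by
    intro p hp
    rw [integral_finset_sum _
      (fun q hq => (memLp2_integrable_mul (hL2 p hp) (hL2 q hq)).const_mul _)]
    have hterm : ∀ q ∈ U, ∫ ω, (a p * a q) * (e p ω * e q ω) ∂P
        = if q = p then β * (a p) ^ 2 else 0 := by
      intro q hq
      rw [integral_const_mul]
      by_cases h : q = p
      · subst h
        have h2 : (fun ω => e q ω * e q ω) = fun ω => (e q ω) ^ 2 := by
          funext ω; ring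
        rw [if_pos rfl, h2, hvar q hq]
        ring
      · rw [if_neg h, horth p hp q hq (Ne.symm h), mul_zero]
    rw [Finset.sum_congr rfl hterm, Finset.sum_ite_eq' U p, if_pos hp]
  rw [Finset.sum_congr rfl hinner, ← Finset.mul_sum]

/-- The within-deviation as a linear combination. -/
lemma sum_coef_mul {ιN ιT : Type*} [DecidableEq ιN] [DecidableEq ιT]
    (I : Finset ιN) (S : Finset ιT) {i : ιN} {t : ιT} (hi : i ∈ I) (ht : t ∈ S)
    (f : ιN → ιT → ℝ) :
    ∑ j ∈ I, ∑ s ∈ S, (((if j = i then (1:ℝ) else 0) - (I.card : ℝ)⁻¹)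
        * ((if s = t then (1:ℝ) else 0) - (S.card : ℝ)⁻¹)) * f j s
      = f i t - (S.card : ℝ)⁻¹ * ∑ s ∈ S, f i s - (I.card : ℝ)⁻¹ * ∑ j ∈ I, f j t
        + (I.card : ℝ)⁻¹ * ((S.card : ℝ)⁻¹ * ∑ j ∈ I, ∑ s ∈ S, f j s) := by
  have hrow : ∀ g : ιT → ℝ, ∑ s ∈ S, ((if s = t then (1:ℝ) else 0) - (S.card : ℝ)⁻¹) * g s
      = g t - (S.card : ℝ)⁻¹ * ∑ s ∈ S, g s := by
    intro g
    simp only [sub_mul, ite_mul, one_mul, zero_mul, Finset.sum_sub_distrib,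
      Finset.sum_ite_eq' S t, ht, if_true, ← Finset.mul_sum]
  have hcol : ∀ g : ιN → ℝ, ∑ j ∈ I, ((if j = i then (1:ℝ) else 0) - (I.card : ℝ)⁻¹) * g j
      = g i - (I.card : ℝ)⁻¹ * ∑ j ∈ I, g j := by
    intro g
    simp only [sub_mul, ite_mul, one_mul, zero_mul, Finset.sum_sub_distrib,
      Finset.sum_ite_eq' I i, hi, if_true, ← Finset.mul_sum]
  have step1 : ∀ j : ιN, ∑ s ∈ S, (((if j = i then (1:ℝ) else 0) - (I.card : ℝ)⁻¹)
      * ((if s = t then (1:ℝ) else 0) - (S.card : ℝ)⁻¹)) * f j s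
      = ((if j = i then (1:ℝ) else 0) - (I.card : ℝ)⁻¹)
        * (f j t - (S.card : ℝ)⁻¹ * ∑ s ∈ S, f j s) := by
    intro j
    rw [← hrow (f j), Finset.mul_sum]
    exact Finset.sum_congr rfl fun s _ => by ring
  rw [Finset.sum_congr rfl fun j _ => step1 j,
    hcol (fun j => f j t - (S.card : ℝ)⁻¹ * ∑ s ∈ S, f j s)]
  rw [Finset.sum_sub_distrib, ← Finset.mul_sum]
  ring

lemma subPanel_eq {N T : ℕ} (Y : Fin N → Fin T → Ω → ℝ) (α : Fin N → ℝ) (γ : Fin T → ℝ)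
    (I : Finset (Fin N)) (S : Finset (Fin T)) (hI : I.Nonempty) (hS : S.Nonempty) (ω : Ω) :
    subPanelEst Y I S ω = ((I.card * S.card : ℕ) : ℝ)⁻¹ * ∑ i ∈ I, ∑ t ∈ S,
      (∑ p ∈ I ×ˢ S, ((((if p.1 = i then (1:ℝ) else 0) - (I.card : ℝ)⁻¹)
          * ((if p.2 = t then (1:ℝ) else 0) - (S.card : ℝ)⁻¹))
        * (Y p.1 p.2 ω - α p.1 - γ p.2))) ^ 2 := by
  have hIne : (I.card : ℝ) ≠ 0 := Nat.cast_ne_zero.2 (Finset.card_ne_zero.2 hI)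
  have hSne : (S.card : ℝ) ≠ 0 := Nat.cast_ne_zero.2 (Finset.card_ne_zero.2 hS)
  unfold subPanelEst
  congr 1
  refine Finset.sum_congr rfl fun i hi => Finset.sum_congr rfl fun t ht => ?_
  congr 1
  rw [Finset.sum_product, sum_coef_mul I S hi ht (fun j s => Y j s ω - α j - γ s)]
  have e1 : ∑ s ∈ S, (Y i s ω - α i - γ s)
      = (∑ s ∈ S, Y i s ω) - (S.card : ℝ) * α i - ∑ s ∈ S, γ s := by
    simp [Finset.sum_sub_distrib, Finset.sum_const, nsmul_eq_mul, mul_comm]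
  have e2 : ∑ j ∈ I, (Y j t ω - α j - γ t)
      = (∑ j ∈ I, Y j t ω) - (∑ j ∈ I, α j) - (I.card : ℝ) * γ t := by
    simp [Finset.sum_sub_distrib, Finset.sum_const, nsmul_eq_mul, mul_comm]
  have e3 : ∑ j ∈ I, ∑ s ∈ S, (Y j s ω - α j - γ s)
      = (∑ j ∈ I, ∑ s ∈ S, Y j s ω) - (S.card : ℝ) * ∑ j ∈ I, α j
        - (I.card : ℝ) * ∑ s ∈ S, γ s := by
    have : ∀ j ∈ I, ∑ s ∈ S, (Y j s ω - α j - γ s)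
        = (∑ s ∈ S, Y j s ω) - (S.card : ℝ) * α j - ∑ s ∈ S, γ s := by
      intro j _
      simp [Finset.sum_sub_distrib, Finset.sum_const, nsmul_eq_mul, mul_comm]
    rw [Finset.sum_congr rfl this, Finset.sum_sub_distrib, Finset.sum_sub_distrib,
      ← Finset.mul_sum, Finset.sum_const, nsmul_eq_mul]
    try ring
  rw [e1, e2, e3]
  push_cast
  field_simp
  try ring

lemma sum_ite_sub_inv_sq {ι : Type*} [DecidableEq ι] (K : Finset ι) {k : ι} (hk : k ∈ K) :
    ∑ j ∈ K, ((if j = k then (1:ℝ) else 0) - (K.card : ℝ)⁻¹) ^ 2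
      = 1 - (K.card : ℝ)⁻¹ := by
  have hc : (K.card : ℝ) ≠ 0 := Nat.cast_ne_zero.2 (Finset.card_ne_zero.2 ⟨k, hk⟩)
  have h : ∀ j ∈ K, ((if j = k then (1:ℝ) else 0) - (K.card : ℝ)⁻¹) ^ 2
      = (if j = k then 1 - 2 * (K.card : ℝ)⁻¹ else 0) + ((K.card : ℝ)⁻¹) ^ 2 := by
    intro j _
    split <;> ring
  rw [Finset.sum_congr rfl h, Finset.sum_add_distrib, Finset.sum_ite_eq' K k, if_pos hk,
    Finset.sum_const, nsmul_eq_mul]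
  field_simp
  ring

lemma subPanel_integrable {N T : ℕ} (Y : Fin N → Fin T → Ω → ℝ)
    (α : Fin N → ℝ) (γ : Fin T → ℝ)
    (hL2 : ∀ i t, MemLp (fun ω => Y i t ω - α i - γ t) 2 P)
    (I : Finset (Fin N)) (S : Finset (Fin T)) (hI : I.Nonempty) (hS : S.Nonempty) :
    Integrable (subPanelEst Y I S) P := by
  have h : subPanelEst Y I S = fun ω => ((I.card * S.card : ℕ) : ℝ)⁻¹ * ∑ i ∈ I, ∑ t ∈ S,
      (∑ p ∈ I ×ˢ S, ((((if p.1 = i then (1:ℝ) else 0) - (I.card : ℝ)⁻¹)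
          * ((if p.2 = t then (1:ℝ) else 0) - (S.card : ℝ)⁻¹))
        * (Y p.1 p.2 ω - α p.1 - γ p.2))) ^ 2 :=
    funext fun ω => subPanel_eq Y α γ I S hI hS ω
  rw [h]
  refine (Integrable.const_mul ?_ _)
  refine integrable_finset_sum _ fun i _ => integrable_finset_sum _ fun t _ => ?_
  have hmem : MemLp (fun ω => ∑ p ∈ I ×ˢ S, ((((if p.1 = i then (1:ℝ) else 0) - (I.card : ℝ)⁻¹)
      * ((if p.2 = t then (1:ℝ) else 0) - (S.card : ℝ)⁻¹))
      * (Y p.1 p.2 ω - α p.1 - γ p.2))) 2 P :=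
    memLp_finset_sum (f := fun (p : Fin N × Fin T) (ω : Ω) =>
      ((((if p.1 = i then (1:ℝ) else 0) - (I.card : ℝ)⁻¹)
        * ((if p.2 = t then (1:ℝ) else 0) - (S.card : ℝ)⁻¹))
        * (Y p.1 p.2 ω - α p.1 - γ p.2))) _
      fun p _ => (hL2 p.1 p.2).const_mul _
  exact hmem.integrable_sq

lemma subPanel_integral {N T : ℕ} [IsProbabilityMeasure P] (β : ℝ)
    (Y : Fin N → Fin T → Ω → ℝ) (α : Fin N → ℝ) (γ : Fin T → ℝ)
    (hL2 : ∀ i t, MemLp (fun ω => Y i t ω - α i - γ t) 2 P)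
    (hvar : ∀ i t, ∫ ω, (Y i t ω - α i - γ t) ^ 2 ∂P = β)
    (horth : ∀ (i j : Fin N) (t s : Fin T), (i, t) ≠ (j, s) →
      ∫ ω, (Y i t ω - α i - γ t) * (Y j s ω - α j - γ s) ∂P = 0)
    (I : Finset (Fin N)) (S : Finset (Fin T)) (hI : I.Nonempty) (hS : S.Nonempty) :
    ∫ ω, subPanelEst Y I S ω ∂P
      = β * ((1 - (I.card : ℝ)⁻¹) * (1 - (S.card : ℝ)⁻¹)) := by
  have hIne : (I.card : ℝ) ≠ 0 := Nat.cast_ne_zero.2 (Finset.card_ne_zero.2 hI)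
  have hSne : (S.card : ℝ) ≠ 0 := Nat.cast_ne_zero.2 (Finset.card_ne_zero.2 hS)
  have hone : ∀ (i : Fin N) (t : Fin T), i ∈ I → t ∈ S → ∫ ω,
      (∑ p ∈ I ×ˢ S, ((((if p.1 = i then (1:ℝ) else 0) - (I.card : ℝ)⁻¹)
          * ((if p.2 = t then (1:ℝ) else 0) - (S.card : ℝ)⁻¹))
        * (Y p.1 p.2 ω - α p.1 - γ p.2))) ^ 2 ∂P
      = β * ((1 - (I.card : ℝ)⁻¹) * (1 - (S.card : ℝ)⁻¹)) := by
    intro i t hi ht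
    rw [integral_sq_sum β (I ×ˢ S)
      (fun (p : Fin N × Fin T) (ω : Ω) => Y p.1 p.2 ω - α p.1 - γ p.2)
      (fun (p : Fin N × Fin T) => (((if p.1 = i then (1:ℝ) else 0) - (I.card : ℝ)⁻¹)
        * ((if p.2 = t then (1:ℝ) else 0) - (S.card : ℝ)⁻¹)))
      (fun (p : Fin N × Fin T) _ => hL2 p.1 p.2)
      (fun (p : Fin N × Fin T) _ => hvar p.1 p.2)
      (fun (p : Fin N × Fin T) _ (q : Fin N × Fin T) _ hpq =>
        horth p.1 q.1 p.2 q.2 (by simpa [Prod.ext_iff] using hpq))]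
    congr 1
    rw [Finset.sum_product]
    have hrow : ∀ j ∈ I, ∑ s ∈ S, ((((if j = i then (1:ℝ) else 0) - (I.card : ℝ)⁻¹)
        * ((if s = t then (1:ℝ) else 0) - (S.card : ℝ)⁻¹))) ^ 2
        = ((if j = i then (1:ℝ) else 0) - (I.card : ℝ)⁻¹) ^ 2
          * (1 - (S.card : ℝ)⁻¹) := by
      intro j _
      rw [← sum_ite_sub_inv_sq S ht, Finset.mul_sum]
      exact Finset.sum_congr rfl fun s _ => by ring
    rw [Finset.sum_congr rfl hrow, ← Finset.sum_mul, sum_ite_sub_inv_sq I hi]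
  have hIntF : ∀ (i : Fin N) (t : Fin T), Integrable (fun ω =>
      (∑ p ∈ I ×ˢ S, ((((if p.1 = i then (1:ℝ) else 0) - (I.card : ℝ)⁻¹)
          * ((if p.2 = t then (1:ℝ) else 0) - (S.card : ℝ)⁻¹))
        * (Y p.1 p.2 ω - α p.1 - γ p.2))) ^ 2) P := by
    intro i t
    exact (memLp_finset_sum (f := fun (p : Fin N × Fin T) (ω : Ω) =>
      ((((if p.1 = i then (1:ℝ) else 0) - (I.card : ℝ)⁻¹)
          * ((if p.2 = t then (1:ℝ) else 0) - (S.card : ℝ)⁻¹))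
        * (Y p.1 p.2 ω - α p.1 - γ p.2))) _
      (fun p _ => (hL2 p.1 p.2).const_mul _)).integrable_sq
  have hIntRow : ∀ i : Fin N, Integrable (fun ω => ∑ t ∈ S,
      (∑ p ∈ I ×ˢ S, ((((if p.1 = i then (1:ℝ) else 0) - (I.card : ℝ)⁻¹)
          * ((if p.2 = t then (1:ℝ) else 0) - (S.card : ℝ)⁻¹))
        * (Y p.1 p.2 ω - α p.1 - γ p.2))) ^ 2) P :=
    fun i => integrable_finset_sum _ fun t _ => hIntF i t
  calc ∫ ω, subPanelEst Y I S ω ∂P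
      = ((I.card * S.card : ℕ) : ℝ)⁻¹ * ∫ ω, ∑ i ∈ I, ∑ t ∈ S,
        (∑ p ∈ I ×ˢ S, ((((if p.1 = i then (1:ℝ) else 0) - (I.card : ℝ)⁻¹)
            * ((if p.2 = t then (1:ℝ) else 0) - (S.card : ℝ)⁻¹))
          * (Y p.1 p.2 ω - α p.1 - γ p.2))) ^ 2 ∂P := by
        simp_rw [subPanel_eq Y α γ I S hI hS]
        rw [integral_const_mul]
    _ = ((I.card * S.card : ℕ) : ℝ)⁻¹ * ∑ i ∈ I, ∫ ω, ∑ t ∈ S,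
        (∑ p ∈ I ×ˢ S, ((((if p.1 = i then (1:ℝ) else 0) - (I.card : ℝ)⁻¹)
            * ((if p.2 = t then (1:ℝ) else 0) - (S.card : ℝ)⁻¹))
          * (Y p.1 p.2 ω - α p.1 - γ p.2))) ^ 2 ∂P := by
        rw [integral_finset_sum _ fun i _ => hIntRow i]
    _ = ((I.card * S.card : ℕ) : ℝ)⁻¹ * ∑ i ∈ I, ∑ t ∈ S, ∫ ω,
        (∑ p ∈ I ×ˢ S, ((((if p.1 = i then (1:ℝ) else 0) - (I.card : ℝ)⁻¹)
            * ((if p.2 = t then (1:ℝ) else 0) - (S.card : ℝ)⁻¹))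
          * (Y p.1 p.2 ω - α p.1 - γ p.2))) ^ 2 ∂P := by
        congr 1
        exact Finset.sum_congr rfl fun i _ =>
          integral_finset_sum _ fun t _ => hIntF i t
    _ = ((I.card * S.card : ℕ) : ℝ)⁻¹ * ∑ i ∈ I, ∑ t ∈ S,
        β * ((1 - (I.card : ℝ)⁻¹) * (1 - (S.card : ℝ)⁻¹)) := by
        congr 1
        exact Finset.sum_congr rfl fun i hi =>
          Finset.sum_congr rfl fun t ht => hone i t hi ht
    _ = β * ((1 - (I.card : ℝ)⁻¹) * (1 - (S.card : ℝ)⁻¹)) := by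
        simp only [Finset.sum_const, nsmul_eq_mul]
        push_cast
        field_simp

end Aux

/-- The split-panel jackknife estimator
`β̃^J = 3·β̂_{N,T} − β̃_{N,T/2} − β̃_{N/2,T}` satisfies `E[β̃^J] = β·(1 − 1/(N·T))`. -/
theorem split_panel_jackknife_bias
    {Ω : Type*} [MeasurableSpace Ω] {P : Measure Ω} [IsProbabilityMeasure P]
    {n m : ℕ} (hn : 1 ≤ n) (hm : 1 ≤ m)
    (β : ℝ) (α : Fin (2 * n) → ℝ) (γ : Fin (2 * m) → ℝ)
    (Y : Fin (2 * n) → Fin (2 * m) → Ω → ℝ)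
    (hL2 : ∀ (i : Fin (2 * n)) (t : Fin (2 * m)),
      MemLp (fun ω => Y i t ω - α i - γ t) 2 P)
    (hmean : ∀ (i : Fin (2 * n)) (t : Fin (2 * m)),
      ∫ ω, (Y i t ω - α i - γ t) ∂P = 0)
    (hvar : ∀ (i : Fin (2 * n)) (t : Fin (2 * m)),
      ∫ ω, (Y i t ω - α i - γ t) ^ 2 ∂P = β)
    (horth : ∀ (i j : Fin (2 * n)) (t s : Fin (2 * m)), (i, t) ≠ (j, s) →
      ∫ ω, (Y i t ω - α i - γ t) * (Y j s ω - α j - γ s) ∂P = 0) :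
    ∫ ω, (3 * subPanelEst Y Finset.univ Finset.univ ω
        - (subPanelEst Y Finset.univ (firstHalf m) ω
            + subPanelEst Y Finset.univ (secondHalf m) ω) / 2
        - (subPanelEst Y (firstHalf n) Finset.univ ω
            + subPanelEst Y (secondHalf n) Finset.univ ω) / 2) ∂P
      = β * (1 - 1 / ((2 * (n : ℝ)) * (2 * (m : ℝ)))) := by
  have hnu : (Finset.univ : Finset (Fin (2 * n))).Nonempty :=
    ⟨⟨0, by omega⟩, Finset.mem_univ _⟩
  have hmu : (Finset.univ : Finset (Fin (2 * m))).Nonempty :=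
    ⟨⟨0, by omega⟩, Finset.mem_univ _⟩
  have hf1 : (firstHalf m).Nonempty :=
    Finset.card_pos.1 (by rw [card_firstHalf]; omega)
  have hf2 : (secondHalf m).Nonempty :=
    Finset.card_pos.1 (by rw [card_secondHalf]; omega)
  have hg1 : (firstHalf n).Nonempty :=
    Finset.card_pos.1 (by rw [card_firstHalf]; omega)
  have hg2 : (secondHalf n).Nonempty :=
    Finset.card_pos.1 (by rw [card_secondHalf]; omega)
  have iA := subPanel_integrable Y α γ hL2 Finset.univ Finset.univ hnu hmu
  have iB := subPanel_integrable Y α γ hL2 Finset.univ (firstHalf m) hnu hf1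
  have iC := subPanel_integrable Y α γ hL2 Finset.univ (secondHalf m) hnu hf2
  have iD := subPanel_integrable Y α γ hL2 (firstHalf n) Finset.univ hg1 hmu
  have iE := subPanel_integrable Y α γ hL2 (secondHalf n) Finset.univ hg2 hmu
  have i1 : Integrable (fun ω => 3 * subPanelEst Y Finset.univ Finset.univ ω
      - (subPanelEst Y Finset.univ (firstHalf m) ω
          + subPanelEst Y Finset.univ (secondHalf m) ω) / 2) P :=
    (iA.const_mul 3).sub ((iB.add iC).div_const 2)
  have i2 : Integrable (fun ω => (subPanelEst Y (firstHalf n) Finset.univ ω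
      + subPanelEst Y (secondHalf n) Finset.univ ω) / 2) P :=
    (iD.add iE).div_const 2
  have i3 : Integrable (fun ω => 3 * subPanelEst Y Finset.univ Finset.univ ω) P :=
    iA.const_mul 3
  have i4 : Integrable (fun ω => (subPanelEst Y Finset.univ (firstHalf m) ω
      + subPanelEst Y Finset.univ (secondHalf m) ω) / 2) P :=
    (iB.add iC).div_const 2
  rw [integral_sub i1 i2, integral_sub i3 i4,
    integral_div, integral_div, integral_add iB iC, integral_add iD iE,
    integral_const_mul]
  have vA := subPanel_integral β Y α γ hL2 hvar horth Finset.univ Finset.univ hnu hmu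
  have vB := subPanel_integral β Y α γ hL2 hvar horth Finset.univ (firstHalf m) hnu hf1
  have vC := subPanel_integral β Y α γ hL2 hvar horth Finset.univ (secondHalf m) hnu hf2
  have vD := subPanel_integral β Y α γ hL2 hvar horth (firstHalf n) Finset.univ hg1 hmu
  have vE := subPanel_integral β Y α γ hL2 hvar horth (secondHalf n) Finset.univ hg2 hmu
  rw [vA, vB, vC, vD, vE, Finset.card_univ, Fintype.card_fin, Finset.card_univ,
    Fintype.card_fin, card_firstHalf, card_secondHalf, card_firstHalf, card_secondHalf]
  have hn0 : (n : ℝ) ≠ 0 := Nat.cast_ne_zero.2 (by omega)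
  have hm0 : (m : ℝ) ≠ 0 := Nat.cast_ne_zero.2 (by omega)
  push_cast
  field_simp
  ring
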